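/- There is a constant C₀ such that for every k ≥ 1 and every set of k points in the square [0, √k]², the shortest Hamiltonian tour through the points has length at most C₀·k. -/

import Mathlib

open Metric

noncomputable local instance {n : ℕ} : DecidableEq (EuclideanSpace ℝ (Fin n)) :=
  Classical.decEq _

noncomputable def plen {α : Type*} [PseudoMetricSpace α] : List α → ℝ
  | [] => 0
  | [_] => 0
  | a :: b :: l => dist a b + plen (b :: l)

noncomputable def clen {α : Type*} [PseudoMetricSpace α] : List α → ℝ
  | [] => 0
  | a :: l => plen (a :: l) + dist (l.getLastD a) a

noncomputable def minTourLen {α : Type*} [PseudoMetricSpace α] [DecidableEq α]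
    (S : Finset α) : ℝ :=
  sInf {L | ∃ l : List α, l.Nodup ∧ l.toFinset = S ∧ clen l = L}

lemma plen_nonneg {α : Type*} [PseudoMetricSpace α] : ∀ l : List α, 0 ≤ plen l
  | [] => le_refl 0
  | [_] => le_refl 0
  | a :: b :: l => by
      rw [plen]
      exact add_nonneg dist_nonneg (plen_nonneg (b :: l))

lemma clen_nonneg {α : Type*} [PseudoMetricSpace α] : ∀ l : List α, 0 ≤ clen l
  | [] => le_refl 0
  | a :: l => by
      rw [clen]
      exact add_nonneg (plen_nonneg _) dist_nonneg

lemma minTourLen_le {α : Type*} [PseudoMetricSpace α] [DecidableEq α] (S : Finset α)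
    (l : List α) (h1 : l.Nodup) (h2 : l.toFinset = S) : minTourLen S ≤ clen l :=
  csInf_le ⟨0, fun _ ⟨l', _, _, hL⟩ => hL ▸ clen_nonneg l'⟩ ⟨l, h1, h2, rfl⟩

lemma dist_le_l1 (a b : EuclideanSpace ℝ (Fin 2)) :
    dist a b ≤ |a 0 - b 0| + |a 1 - b 1| := by
  rw [EuclideanSpace.dist_eq, Fin.sum_univ_two, Real.dist_eq, Real.dist_eq]
  have h : |a 0 - b 0| ^ 2 + |a 1 - b 1| ^ 2 ≤ (|a 0 - b 0| + |a 1 - b 1|) ^ 2 := by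
    nlinarith [abs_nonneg (a 0 - b 0), abs_nonneg (a 1 - b 1)]
  calc Real.sqrt (|a 0 - b 0| ^ 2 + |a 1 - b 1| ^ 2)
      ≤ Real.sqrt ((|a 0 - b 0| + |a 1 - b 1|) ^ 2) := Real.sqrt_le_sqrt h
    _ = |a 0 - b 0| + |a 1 - b 1| := by
        rw [Real.sqrt_sq (by positivity)]

lemma chain_of_chain_mem {α : Type*} {r q : α → α → Prop} {P : α → Prop}
    (H : ∀ a b, P a → P b → r a b → q a b) :
    ∀ (l : List α) (a : α), List.Chain r a l → (∀ x ∈ a :: l, P x) → List.Chain q a l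
  | [], _, _, _ => .nil
  | b :: l, a, h, hm => by
    cases h with
    | cons_cons hab h =>
      exact .cons (H a b (hm a (by simp)) (hm b (by simp)) hab)
        (chain_of_chain_mem H l b h (fun x hx => hm x (by simp at hx ⊢; tauto)))

lemma plen_chain {α : Type*} [PseudoMetricSpace α] (f : α → ℝ) (c : ℝ) :
    ∀ (l : List α) (a : α), List.Chain (fun x y => dist x y ≤ f y - f x + c) a l →
      plen (a :: l) ≤ f (l.getLastD a) - f a + c * l.length
  | [], a, _ => by simp [plen]
  | b :: l, a, h => by
    cases h with
    | cons_cons hab h =>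
      have ih := plen_chain f c l b h
      rw [plen, List.getLastD_cons]
      push_cast [List.length_cons]
      linarith

/-- Few's bound: there is a constant C₀ such that any k points in
[0, √k]² admit a Hamiltonian tour of length at most C₀·k. -/
theorem stmt9 : ∃ C₀ : ℝ, ∀ (k : ℕ), 1 ≤ k →
    ∀ S : Finset (EuclideanSpace ℝ (Fin 2)), S.card = k →
      (∀ x ∈ S, ∀ i : Fin 2, x i ∈ Set.Icc (0 : ℝ) (Real.sqrt k)) →
      minTourLen S ≤ C₀ * k := by
  classical
  refine ⟨10, fun k hk S hcard hbox => ?_⟩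
  set q : ℝ := Real.sqrt k with hq
  have hk1 : (1 : ℝ) ≤ (k : ℝ) := by exact_mod_cast hk
  have hq0 : 0 ≤ q := Real.sqrt_nonneg _
  have hq1 : 1 ≤ q := by
    rw [hq, show (1 : ℝ) = Real.sqrt 1 by simp]
    exact Real.sqrt_le_sqrt hk1
  have hqsq : q * q = (k : ℝ) := Real.mul_self_sqrt (by positivity)
  have hqk : q ≤ (k : ℝ) := by nlinarith
  -- strip index
  set s : EuclideanSpace ℝ (Fin 2) → ℤ := fun p => ⌊p 1⌋ with hs
  set le : EuclideanSpace ℝ (Fin 2) → EuclideanSpace ℝ (Fin 2) → Bool :=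
    fun x y => decide (s x < s y ∨ (s x = s y ∧ x 0 ≤ y 0)) with hle
  set l : List (EuclideanSpace ℝ (Fin 2)) := S.toList.mergeSort le with hl
  have hperm : l.Perm S.toList := List.mergeSort_perm _ _
  have hnodup : l.Nodup := hperm.symm.nodup S.nodup_toList
  have htf : l.toFinset = S := by
    rw [List.toFinset_eq_of_perm _ _ hperm, Finset.toList_toFinset]
  have hmem : ∀ x ∈ l, x ∈ S := fun x hx => by
    rw [← htf]; exact List.mem_toFinset.mpr hx
  have hsorted : l.Pairwise (fun a b => le a b = true) := by
    apply List.pairwise_mergeSort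
    · intro a b c hab hbc
      simp only [hle, decide_eq_true_eq] at *
      rcases hab with h1 | ⟨h1, h1'⟩ <;> rcases hbc with h2 | ⟨h2, h2'⟩
      · exact Or.inl (h1.trans h2)
      · exact Or.inl (h2 ▸ h1)
      · exact Or.inl (h1 ▸ h2)
      · exact Or.inr ⟨h1.trans h2, h1'.trans h2'⟩
    · intro a b
      simp only [hle, Bool.or_eq_true, decide_eq_true_eq]
      rcases lt_trichotomy (s a) (s b) with h | h | h
      · exact Or.inl (Or.inl h)
      · rcases le_total (a 0) (b 0) with h' | h'
        · exact Or.inl (Or.inr ⟨h, h'⟩)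
        · exact Or.inr (Or.inr ⟨h.symm, h'⟩)
      · exact Or.inr (Or.inl h)
  have hlen : l.length = k := by
    rw [hperm.length_eq, Finset.length_toList, hcard]
  -- the potential function
  set F : EuclideanSpace ℝ (Fin 2) → ℝ := fun p => p 0 + (2 * q + 1) * (s p : ℝ) with hF
  have hFbound : ∀ x ∈ S, 0 ≤ F x ∧ F x ≤ 4 * (k : ℝ) := by
    intro x hx
    obtain ⟨h00, h01⟩ := hbox x hx 0
    obtain ⟨h10, h11⟩ := hbox x hx 1
    have hfl : (s x : ℝ) ≤ x 1 := Int.floor_le _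
    have hfl0 : (0 : ℝ) ≤ (s x : ℝ) := by
      exact_mod_cast Int.floor_nonneg.mpr h10
    constructor
    · have : 0 ≤ (2 * q + 1) * (s x : ℝ) := by positivity
      simp only [hF]; linarith
    · have h1 : (s x : ℝ) ≤ q := hfl.trans h11
      have : (2 * q + 1) * (s x : ℝ) ≤ (2 * q + 1) * q := by
        apply mul_le_mul_of_nonneg_left h1 (by positivity)
      simp only [hF]; nlinarith
  have key : ∀ x y : EuclideanSpace ℝ (Fin 2), x ∈ S → y ∈ S → le x y = true →
      dist x y ≤ F y - F x + 1 := by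
    intro x y hxS hyS hxy
    obtain ⟨hx00, hx01⟩ := hbox x hxS 0
    obtain ⟨hx10, hx11⟩ := hbox x hxS 1
    obtain ⟨hy00, hy01⟩ := hbox y hyS 0
    obtain ⟨hy10, hy11⟩ := hbox y hyS 1
    have hxf1 : (s x : ℝ) ≤ x 1 := Int.floor_le _
    have hxf2 : x 1 < (s x : ℝ) + 1 := Int.lt_floor_add_one _
    have hyf1 : (s y : ℝ) ≤ y 1 := Int.floor_le _
    have hyf2 : y 1 < (s y : ℝ) + 1 := Int.lt_floor_add_one _
    have hd := dist_le_l1 x y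
    simp only [hle, decide_eq_true_eq] at hxy
    rcases hxy with h | ⟨h, h'⟩
    · -- different strips
      have hd1 : ((s x : ℝ) + 1) ≤ (s y : ℝ) := by exact_mod_cast h
      have ha : |x 0 - y 0| ≤ q := abs_le.mpr ⟨by linarith, by linarith⟩
      have hb : |x 1 - y 1| ≤ ((s y : ℝ) - (s x : ℝ)) + 1 :=
        abs_le.mpr ⟨by linarith, by linarith⟩
      simp only [hF]
      nlinarith [mul_nonneg (mul_nonneg (by norm_num : (0:ℝ) ≤ 2) hq0)
        (by linarith : (0:ℝ) ≤ (s y : ℝ) - (s x : ℝ) - 1)]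
    · -- same strip
      have hseq : (s x : ℝ) = (s y : ℝ) := by exact_mod_cast h
      have ha : |x 0 - y 0| = y 0 - x 0 := by
        rw [abs_sub_comm, abs_of_nonneg (by linarith)]
      have hb : |x 1 - y 1| ≤ 1 := abs_le.mpr ⟨by linarith, by linarith⟩
      simp only [hF, hseq]
      linarith
  -- l is nonempty
  obtain ⟨a, l', heq⟩ : ∃ a l', l = a :: l' := by
    cases hh : l with
    | nil => rw [hh] at hlen; simp at hlen; omega
    | cons a l' => exact ⟨a, l', rfl⟩
  rw [heq] at hsorted hmem hnodup htf hlen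
  have hchain0 : List.Chain (fun a b => le a b = true) a l' := hsorted.isChain
  have hchain : List.Chain (fun x y => dist x y ≤ F y - F x + 1) a l' :=
    chain_of_chain_mem (fun u v hu hv huv => key u v hu hv huv) l' a hchain0 hmem
  have hplen : plen (a :: l') ≤ F (l'.getLastD a) - F a + 1 * l'.length :=
    plen_chain F 1 l' a hchain
  have hlast_mem : l'.getLastD a ∈ S := hmem _ List.getLastD_mem_cons
  have ha_mem : a ∈ S := hmem a (by simp)
  have hFl := hFbound _ hlast_mem
  have hFa := hFbound a ha_mem
  have hlen' : (l'.length : ℝ) ≤ (k : ℝ) := by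
    have : l'.length ≤ k := by simp at hlen; omega
    exact_mod_cast this
  -- closing edge
  have hclose : dist (l'.getLastD a) a ≤ 2 * q := by
    have hd := dist_le_l1 (l'.getLastD a) a
    obtain ⟨h00, h01⟩ := hbox _ hlast_mem 0
    obtain ⟨h10, h11⟩ := hbox _ hlast_mem 1
    obtain ⟨g00, g01⟩ := hbox a ha_mem 0
    obtain ⟨g10, g11⟩ := hbox a ha_mem 1
    have h1 : |l'.getLastD a 0 - a 0| ≤ q := abs_le.mpr ⟨by linarith, by linarith⟩
    have h2 : |l'.getLastD a 1 - a 1| ≤ q := abs_le.mpr ⟨by linarith, by linarith⟩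
    linarith
  have hclen : clen (a :: l') ≤ 10 * (k : ℝ) := by
    rw [clen]
    have : (2 : ℝ) * q ≤ 2 * k := by linarith
    linarith [hFl.2, hFa.1]
  calc minTourLen S ≤ clen (a :: l') := minTourLen_le S _ hnodup htf
    _ ≤ 10 * (k : ℝ) := hclen
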